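/- Let L be a finitely generated subgroup of F₂ × F₂ (the direct product of two free groups of rank 2). Then either L contains a subgroup isomorphic to F₂ × F₂, or L is isomorphic to a free group, or to a direct product ℤ × F for some free group F. -/

import Mathlib

/-!
Auxiliary development: in a free group, an element conjugate to its own inverse
is trivial.  Proved via reduced words and cyclic rotations.
-/

namespace FGConj

open FreeGroup List

variable {α : Type*} [DecidableEq α]

/-- the pair `q` cancels immediately after `p` -/
abbrev bad (p q : α × Bool) : Prop := p.1 = q.1 ∧ p.2 = !q.2

/-- a word with no cancelling adjacent pair -/
abbrev Reduced (L : List (α × Bool)) : Prop := List.Chain' (fun p q => ¬ bad p q) L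

/-- cyclically reduced -/
abbrev CyclRed (L : List (α × Bool)) : Prop := Reduced (L ++ L)

theorem reduce_eq_self {L : List (α × Bool)} (h : Reduced L) : FreeGroup.reduce L = L := by
  induction L with
  | nil => rfl
  | cons p L ih =>
    have hL : Reduced L := h.tail
    rw [FreeGroup.reduce.cons, ih hL]
    cases L with
    | nil => rfl
    | cons q M =>
      have hb : ¬ bad p q := (List.isChain_cons_cons.mp h).1
      simp only [bad] at hb
      simp [hb]

theorem reduced_reduce (L : List (α × Bool)) : Reduced (FreeGroup.reduce L) := by
  induction L with
  | nil => exact List.isChain_nil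
  | cons p L ih =>
    rw [FreeGroup.reduce.cons]
    rcases h : FreeGroup.reduce L with _ | ⟨q, M⟩
    · exact List.isChain_singleton _
    · rw [h] at ih
      by_cases hc : p.1 = q.1 ∧ p.2 = !q.2
      · simp only [hc, and_self, if_true]
        exact ih.tail
      · simp only [hc, if_false]
        exact List.isChain_cons_cons.mpr ⟨fun hb => hc ⟨hb.1, hb.2⟩, ih⟩

theorem reduced_toWord (x : FreeGroup α) : Reduced x.toWord := by
  rw [← FreeGroup.reduce_toWord]
  exact reduced_reduce _

theorem toWord_mk_reduced {L : List (α × Bool)} (h : Reduced L) :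
    (FreeGroup.mk L).toWord = L := by
  rw [FreeGroup.toWord_mk, reduce_eq_self h]

theorem invRev_cons (p : α × Bool) (L : List (α × Bool)) :
    FreeGroup.invRev (p :: L) = FreeGroup.invRev L ++ [(p.1, !p.2)] := by
  simp [FreeGroup.invRev]

theorem invRev_singleton (p : α × Bool) :
    FreeGroup.invRev [p] = [(p.1, !p.2)] := by simp [FreeGroup.invRev]

theorem mk_singleton_mul_cancel (p : α × Bool) :
    FreeGroup.mk [p] * FreeGroup.mk [(p.1, !p.2)] = 1 := by
  have : FreeGroup.mk [(p.1, !p.2)] = (FreeGroup.mk [p])⁻¹ := by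
    rw [FreeGroup.inv_mk, invRev_singleton]
  rw [this, mul_inv_cancel]

theorem CyclRed.reduced {L : List (α × Bool)} (h : CyclRed L) : Reduced L :=
  List.IsChain.prefix h (List.prefix_append L L)

theorem CyclRed.junction {p : α × Bool} {M : List (α × Bool)} (h : CyclRed (p :: M)) :
    ¬ bad ((p :: M).getLast (by simp)) p := by
  have h1 := (List.isChain_append.mp h).2.2
  exact h1 _ (by rw [List.getLast?_eq_getLast_of_ne_nil (by simp)]; rfl) p rfl

theorem CyclRed.rotate_one {p : α × Bool} {M : List (α × Bool)} (h : CyclRed (p :: M)) :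
    CyclRed (M ++ [p]) := by
  have htail : Reduced (M ++ p :: M) := h.tail
  have hj := h.junction
  have hstep : Reduced ((M ++ p :: M) ++ [p]) := by
    apply List.isChain_append.mpr
    refine ⟨htail, List.isChain_singleton _, ?_⟩
    intro x hx y hy
    simp only [List.head?_cons, Option.mem_def, Option.some.injEq] at hy
    subst hy
    have hgl : (M ++ p :: M).getLast? = some ((p :: M).getLast (by simp)) := by
      rw [List.getLast?_append_of_ne_nil _ (by simp),
        List.getLast?_eq_getLast_of_ne_nil (by simp)]
    rw [hgl, Option.mem_def, Option.some.injEq] at hx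
    subst hx
    exact hj
  have heq : (M ++ [p]) ++ (M ++ [p]) = (M ++ p :: M) ++ [p] := by
    simp
  rw [CyclRed, heq]
  exact hstep

theorem CyclRed.rotate {L : List (α × Bool)} (h : CyclRed L) (k : ℕ) :
    CyclRed (L.rotate k) := by
  induction k with
  | zero => simpa using h
  | succ k ih =>
    have hrr : L.rotate (k + 1) = (L.rotate k).rotate 1 := by rw [List.rotate_rotate]
    rw [hrr]
    rcases hL : L.rotate k with _ | ⟨p, M⟩
    · exact List.isChain_nil
    · rw [hL] at ih
      have h2 := ih.rotate_one
      have : (p :: M).rotate 1 = M ++ [p] := by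
        rw [show (1 : ℕ) = 0 + 1 from rfl, List.rotate_cons_succ, List.rotate_zero]
      rw [this]
      exact h2


theorem conj_conj (f h x : FreeGroup α) :
    f * (h * x * h⁻¹) * f⁻¹ = (f * h) * x * (f * h)⁻¹ := by group

theorem not_bad_of_ne {c t : α × Bool} (h : t ≠ (c.1, !c.2)) : ¬ bad c t := by
  rcases c with ⟨ca, cb⟩; rcases t with ⟨ta, tb⟩
  rintro ⟨h1, h2⟩
  simp only at h1 h2
  apply h
  simp only [Prod.mk.injEq]
  exact ⟨h1.symm, by rw [h2, Bool.not_not]⟩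

theorem not_bad_of_ne' {c t : α × Bool} (h : t ≠ (c.1, !c.2)) :
    ¬ bad (t.1, !t.2) (c.1, !c.2) := by
  rcases c with ⟨ca, cb⟩; rcases t with ⟨ta, tb⟩
  rintro ⟨h1, h2⟩
  simp only at h1 h2
  apply h
  simp only [Prod.mk.injEq]
  refine ⟨h1, ?_⟩
  simp only [Bool.not_not] at h2
  rw [← h2, Bool.not_not]

theorem not_bad_of_ne'' {c q : α × Bool} (h : q ≠ c) : ¬ bad q (c.1, !c.2) := by
  rcases c with ⟨ca, cb⟩; rcases q with ⟨qa, qb⟩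
  rintro ⟨h1, h2⟩
  simp only at h1 h2
  apply h
  simp only [Prod.mk.injEq]
  exact ⟨h1, by simpa using h2⟩

theorem rotate_one_cons (p : α × Bool) (Y : List (α × Bool)) :
    (p :: Y).rotate 1 = Y ++ [p] := by
  rw [show (1 : ℕ) = 0 + 1 from rfl, List.rotate_cons_succ, List.rotate_zero]

theorem step (c : α × Bool) (h x' : FreeGroup α)
    (hx : CyclRed x'.toWord)
    (hinv : Reduced (h.toWord ++ x'.toWord ++ FreeGroup.invRev h.toWord)) :
    ∃ (h₂ x'' : FreeGroup α) (k : ℕ),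
      x''.toWord = x'.toWord.rotate k ∧
      Reduced (h₂.toWord ++ x''.toWord ++ FreeGroup.invRev h₂.toWord) ∧
      FreeGroup.mk [c] * (h * x' * h⁻¹) * (FreeGroup.mk [c])⁻¹ = h₂ * x'' * h₂⁻¹ := by
  rcases hT : h.toWord with _ | ⟨t, T₁⟩
  · -- h = 1
    have hone : h = 1 := FreeGroup.toWord_eq_nil_iff.mp hT
    subst hone
    rcases hX : x'.toWord with _ | ⟨p, Y⟩
    · have : x' = 1 := FreeGroup.toWord_eq_nil_iff.mp hX
      subst this
      exact ⟨1, 1, 0, by simp, by simp [FreeGroup.toWord_one, FreeGroup.invRev]; exact List.isChain_nil, by group⟩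
    · have hx'mk : FreeGroup.mk (p :: Y) = x' := by rw [← hX, FreeGroup.mk_toWord]
      rw [hX] at hx
      by_cases hpi : p = (c.1, !c.2)
      · -- case (i): c cancels the head of x'
        have hcr : CyclRed (Y ++ [p]) := by
          have := hx.rotate 1; rwa [rotate_one_cons] at this
        have htw : (FreeGroup.mk (Y ++ [p])).toWord = Y ++ [p] := toWord_mk_reduced hcr.reduced
        refine ⟨1, FreeGroup.mk (Y ++ [p]), 1, ?_, ?_, ?_⟩
        · rw [htw, rotate_one_cons]
        · rw [htw]
          simpa [FreeGroup.toWord_one, FreeGroup.invRev] using hcr.reduced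
        · have h1 : FreeGroup.mk [c] * FreeGroup.mk [p] = 1 := by
            rw [hpi]; exact mk_singleton_mul_cancel c
          have h2 : (FreeGroup.mk [c])⁻¹ = FreeGroup.mk [p] := by
            rw [FreeGroup.inv_mk, invRev_singleton, ← hpi]
          calc FreeGroup.mk [c] * (1 * x' * 1⁻¹) * (FreeGroup.mk [c])⁻¹
              = FreeGroup.mk [c] * x' * (FreeGroup.mk [c])⁻¹ := by group
            _ = FreeGroup.mk [c] * (FreeGroup.mk [p] * FreeGroup.mk Y) * FreeGroup.mk [p] := by
                rw [← hx'mk, h2, FreeGroup.mul_mk]; rfl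
            _ = (FreeGroup.mk [c] * FreeGroup.mk [p]) * (FreeGroup.mk Y * FreeGroup.mk [p]) := by
                group
            _ = 1 * FreeGroup.mk (Y ++ [p]) := by rw [h1, FreeGroup.mul_mk]
            _ = 1 * FreeGroup.mk (Y ++ [p]) * 1⁻¹ := by group
      · by_cases hl : (p :: Y).getLast (by simp) = c
        · -- case (ii): c⁻¹ cancels the tail of x'
          have hXD : p :: Y = (p :: Y).dropLast ++ [c] := by
            conv_lhs => rw [← List.dropLast_append_getLast (l := p :: Y) (by simp)]
            rw [hl]
          set D := (p :: Y).dropLast with hDdef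
          have hrot : (p :: Y).rotate D.length = c :: D := by
            conv_lhs => rw [hXD]
            rw [List.rotate_eq_drop_append_take (by simp), List.drop_left, List.take_left]
            rfl
          have hcr : CyclRed (c :: D) := by
            have := hx.rotate D.length; rwa [hrot] at this
          have htw : (FreeGroup.mk (c :: D)).toWord = c :: D := toWord_mk_reduced hcr.reduced
          refine ⟨1, FreeGroup.mk (c :: D), D.length, ?_, ?_, ?_⟩
          · rw [htw]; exact hrot.symm
          · rw [htw]
            simpa [FreeGroup.toWord_one, FreeGroup.invRev] using hcr.reduced
          · have h2 : (FreeGroup.mk [c])⁻¹ = FreeGroup.mk [(c.1, !c.2)] := by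
              rw [FreeGroup.inv_mk, invRev_singleton]
            calc FreeGroup.mk [c] * (1 * x' * 1⁻¹) * (FreeGroup.mk [c])⁻¹
                = FreeGroup.mk [c] * x' * (FreeGroup.mk [c])⁻¹ := by group
              _ = FreeGroup.mk [c] * (FreeGroup.mk D * FreeGroup.mk [c]) * (FreeGroup.mk [c])⁻¹ := by
                  rw [← hx'mk]
                  conv_lhs => rw [hXD]
                  rw [← FreeGroup.mul_mk]
              _ = FreeGroup.mk [c] * FreeGroup.mk D := by group
              _ = FreeGroup.mk (c :: D) := by rw [FreeGroup.mul_mk]; rfl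
              _ = 1 * FreeGroup.mk (c :: D) * 1⁻¹ := by group
        · -- case (iii): no cancellation, conjugating part becomes [c]
          have hsc : Reduced [c] := List.isChain_singleton _
          refine ⟨FreeGroup.mk [c], x', 0, by rw [List.rotate_zero]; exact hX, ?_, by group⟩
          rw [toWord_mk_reduced hsc, invRev_singleton, hX]
          apply List.isChain_append.mpr
          refine ⟨?_, List.isChain_singleton _, ?_⟩
          · apply List.isChain_append.mpr
            refine ⟨List.isChain_singleton _, hx.reduced, ?_⟩
            intro a ha b hb
            simp only [List.getLast?_singleton, Option.mem_def, Option.some.injEq] at ha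
            simp only [List.head?_cons, Option.mem_def, Option.some.injEq] at hb
            subst ha; subst hb
            exact not_bad_of_ne hpi
          · intro a ha b hb
            simp only [List.head?_cons, Option.mem_def, Option.some.injEq] at hb
            subst hb
            have hgl : ([c] ++ p :: Y).getLast? = some ((p :: Y).getLast (by simp)) := by
              rw [List.getLast?_append_of_ne_nil _ (by simp),
                List.getLast?_eq_getLast_of_ne_nil (by simp)]
            rw [hgl, Option.mem_def, Option.some.injEq] at ha
            subst ha
            exact not_bad_of_ne'' hl
  · -- h has a first letter t
    have hhmk : FreeGroup.mk (t :: T₁) = h := by rw [← hT, FreeGroup.mk_toWord]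
    have hredT : Reduced (t :: T₁) := by rw [← hT]; exact reduced_toWord h
    have hredT₁ : Reduced T₁ := hredT.tail
    by_cases hcanc : t = (c.1, !c.2)
    · -- c cancels the first letter of h
      refine ⟨FreeGroup.mk T₁, x', 0, by rw [List.rotate_zero], ?_, ?_⟩
      · rw [toWord_mk_reduced hredT₁]
        apply List.IsChain.infix (l := h.toWord ++ x'.toWord ++ FreeGroup.invRev h.toWord) hinv
        refine ⟨[t], [(t.1, !t.2)], ?_⟩
        rw [hT, invRev_cons]
        simp
      · have hch : FreeGroup.mk [c] * h = FreeGroup.mk T₁ := by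
          rw [← hhmk, show (t :: T₁) = [t] ++ T₁ from rfl, ← FreeGroup.mul_mk, ← mul_assoc,
            hcanc, mk_singleton_mul_cancel, one_mul]
        rw [conj_conj, hch]
    · -- no cancellation with h
      have hred2 : Reduced (c :: t :: T₁) :=
        List.isChain_cons_cons.mpr ⟨not_bad_of_ne hcanc, hredT⟩
      refine ⟨FreeGroup.mk (c :: t :: T₁), x', 0, by rw [List.rotate_zero], ?_, ?_⟩
      · rw [toWord_mk_reduced hred2, invRev_cons]
        have hassoc : (c :: t :: T₁) ++ x'.toWord ++ (FreeGroup.invRev (t :: T₁) ++ [(c.1, !c.2)]) =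
            [c] ++ ((t :: T₁) ++ x'.toWord ++ FreeGroup.invRev (t :: T₁)) ++ [(c.1, !c.2)] := by
          simp
        rw [hassoc]
        apply List.isChain_append.mpr
        refine ⟨?_, List.isChain_singleton _, ?_⟩
        · apply List.isChain_append.mpr
          refine ⟨List.isChain_singleton _, by rw [← hT]; exact hinv, ?_⟩
          intro a ha b hb
          simp only [List.getLast?_singleton, Option.mem_def, Option.some.injEq] at ha
          subst ha
          have hhd : ((t :: T₁) ++ x'.toWord ++ FreeGroup.invRev (t :: T₁)).head? = some t := by
            simp
          rw [hhd, Option.mem_def, Option.some.injEq] at hb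
          subst hb
          exact not_bad_of_ne hcanc
        · intro a ha b hb
          simp only [List.head?_cons, Option.mem_def, Option.some.injEq] at hb
          subst hb
          have hgl : ([c] ++ ((t :: T₁) ++ x'.toWord ++ FreeGroup.invRev (t :: T₁))).getLast? =
              some (t.1, !t.2) := by
            rw [List.getLast?_append_of_ne_nil _ (by simp [invRev_cons]),
              List.getLast?_append_of_ne_nil _ (by simp [invRev_cons]), invRev_cons,
              List.getLast?_append_of_ne_nil _ (by simp)]
            rfl
          rw [hgl, Option.mem_def, Option.some.injEq] at ha
          subst ha
          exact not_bad_of_ne' hcanc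
      · have hch : FreeGroup.mk [c] * h = FreeGroup.mk (c :: t :: T₁) := by
          rw [← hhmk, FreeGroup.mul_mk]; rfl
        rw [conj_conj, hch]
theorem getElem_idx_congr {β : Type*} {l : List β} {i j : ℕ} (h : i = j) (hi : i < l.length) :
    l[i]'hi = l[j]'(h ▸ hi) := by subst h; rfl

theorem getElem_list_congr {β : Type*} {l l' : List β} (h : l = l') {i : ℕ} (hi : i < l.length) :
    l[i]'hi = l'[i]'(h ▸ hi) := by subst h; rfl

theorem conj_aux : ∀ (n : ℕ) (g h x' : FreeGroup α), g.toWord.length ≤ n →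
    CyclRed x'.toWord →
    Reduced (h.toWord ++ x'.toWord ++ FreeGroup.invRev h.toWord) →
    ∃ (h₂ x'' : FreeGroup α) (k : ℕ),
      x''.toWord = x'.toWord.rotate k ∧
      Reduced (h₂.toWord ++ x''.toWord ++ FreeGroup.invRev h₂.toWord) ∧
      g * (h * x' * h⁻¹) * g⁻¹ = h₂ * x'' * h₂⁻¹ := by
  intro n
  induction n with
  | zero =>
    intro g h x' hg hx hinv
    have hnil : g.toWord = [] := List.length_eq_zero_iff.mp (Nat.le_zero.mp hg)
    have hg1 : g = 1 := FreeGroup.toWord_eq_nil_iff.mp hnil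
    subst hg1
    exact ⟨h, x', 0, by rw [List.rotate_zero], hinv, by group⟩
  | succ n ih =>
    intro g h x' hg hx hinv
    rcases hW : g.toWord with _ | ⟨c, W₁⟩
    · have hg1 : g = 1 := FreeGroup.toWord_eq_nil_iff.mp hW
      subst hg1
      exact ⟨h, x', 0, by rw [List.rotate_zero], hinv, by group⟩
    · have hredW : Reduced (c :: W₁) := by rw [← hW]; exact reduced_toWord g
      have hW₁ : (FreeGroup.mk W₁).toWord = W₁ := toWord_mk_reduced hredW.tail
      have hlen : (FreeGroup.mk W₁).toWord.length ≤ n := by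
        rw [hW₁]
        have := hg
        rw [hW] at this
        simpa using this
      obtain ⟨h₂, x'', k, hrot, hinv2, heq⟩ := ih (FreeGroup.mk W₁) h x' hlen hx hinv
      obtain ⟨h₃, x''', k', hrot', hinv3, heq'⟩ :=
        step c h₂ x'' (by rw [hrot]; exact hx.rotate k) hinv2
      refine ⟨h₃, x''', k + k', ?_, hinv3, ?_⟩
      · rw [hrot', hrot, List.rotate_rotate]
      · have hgmk : FreeGroup.mk [c] * FreeGroup.mk W₁ = g := by
          rw [FreeGroup.mul_mk, show [c] ++ W₁ = c :: W₁ from rfl, ← hW, FreeGroup.mk_toWord]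
        calc g * (h * x' * h⁻¹) * g⁻¹
            = FreeGroup.mk [c] * (FreeGroup.mk W₁ * (h * x' * h⁻¹) * (FreeGroup.mk W₁)⁻¹) *
              (FreeGroup.mk [c])⁻¹ := by rw [← hgmk]; group
          _ = FreeGroup.mk [c] * (h₂ * x'' * h₂⁻¹) * (FreeGroup.mk [c])⁻¹ := by rw [heq]
          _ = h₃ * x''' * h₃⁻¹ := heq'

theorem conj_rotate {x g : FreeGroup α} (hx : CyclRed x.toWord)
    (heq : g * x * g⁻¹ = x⁻¹) : ∃ k, FreeGroup.invRev x.toWord = x.toWord.rotate k := by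
  obtain ⟨h₂, x'', k, hrot, hinv2, heq2⟩ := conj_aux g.toWord.length g 1 x le_rfl hx
    (by simpa [FreeGroup.toWord_one, FreeGroup.invRev] using hx.reduced)
  have heq3 : x⁻¹ = h₂ * x'' * h₂⁻¹ := by
    rw [← heq]
    rw [← heq2]
    group
  have hmk : h₂ * x'' * h₂⁻¹ =
      FreeGroup.mk (h₂.toWord ++ x''.toWord ++ FreeGroup.invRev h₂.toWord) := by
    conv_lhs => rw [← FreeGroup.mk_toWord (x := h₂), ← FreeGroup.mk_toWord (x := x'')]
    rw [FreeGroup.inv_mk, FreeGroup.mul_mk, FreeGroup.mul_mk]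
  have hword : FreeGroup.invRev x.toWord =
      h₂.toWord ++ x''.toWord ++ FreeGroup.invRev h₂.toWord := by
    rw [← FreeGroup.toWord_inv, heq3, hmk, toWord_mk_reduced hinv2]
  have hlen2 : x''.toWord.length = x.toWord.length := by rw [hrot, List.length_rotate]
  have hlen : h₂.toWord.length = 0 := by
    have h1 : (FreeGroup.invRev x.toWord).length = x.toWord.length := FreeGroup.invRev_length
    rw [hword] at h1
    simp only [List.length_append, FreeGroup.invRev_length, hlen2] at h1
    omega
  have hnil : h₂.toWord = [] := List.length_eq_zero_iff.mp hlen
  refine ⟨k, ?_⟩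
  rw [hword, hnil, ← hrot]
  simp [FreeGroup.invRev]

theorem nil_of_invRev_eq_rotate {X : List (α × Bool)} (hc : CyclRed X) {k : ℕ}
    (h : FreeGroup.invRev X = X.rotate k) : X = [] := by
  by_contra hne
  have hn0 : 0 < X.length := List.length_pos_iff.mpr hne
  have h' : FreeGroup.invRev X = X.rotate (k % X.length) := by rw [List.rotate_mod]; exact h
  set n := X.length with hn
  set k' := k % n with hk'
  have hk'n : k' < n := Nat.mod_lt _ hn0
  -- master relation
  have REL : ∀ j (hj : j < n) (hσv : (n - 1 - j + k') % n < n),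
      X[(n - 1 - j + k') % n]'hσv = ((X[j]'hj).1, !(X[j]'hj).2) := by
    intro j hj hσv
    have hi : n - 1 - j < n := by omega
    have hL : (FreeGroup.invRev X)[n - 1 - j]'(by rw [FreeGroup.invRev_length]; exact hi)
        = ((X[j]'hj).1, !(X[j]'hj).2) := by
      show ((X.map fun g => (g.1, !g.2)).reverse)[n - 1 - j]'(by simpa using hi) = _
      rw [List.getElem_reverse]
      rw [getElem_idx_congr
        (show (X.map fun g : α × Bool => (g.1, !g.2)).length - 1 - (n - 1 - j) = j by
          rw [List.length_map]; omega)]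
      rw [List.getElem_map]
    have hR : (X.rotate k')[n - 1 - j]'(by rw [List.length_rotate]; exact hi)
        = X[(n - 1 - j + k') % n]'hσv := by
      rw [List.getElem_rotate]
    have hLR := getElem_list_congr h' (i := n - 1 - j)
      (by rw [FreeGroup.invRev_length]; exact hi)
    rw [hL] at hLR
    exact (hLR.trans hR).symm
  -- key: solving σ j = m
  have key : ∀ j, j < n → ∀ m, m < n → (j + m + 1) % n = k' % n →
      (n - 1 - j + k') % n = m := by
    intro j hj m hm hcong
    have ha : (n - 1 - j + k') + (j + 1) = n + k' := by omega
    have h1 : (n - 1 - j + k') + (j + 1) ≡ m + (j + 1) [MOD n] := by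
      rw [ha]
      calc n + k' ≡ 0 + k' [MOD n] :=
            Nat.ModEq.add_right k' ((Nat.modEq_zero_iff_dvd).mpr dvd_rfl)
        _ = k' := by omega
        _ ≡ j + m + 1 [MOD n] := (hcong : (j + m + 1) % n = k' % n).symm
        _ = m + (j + 1) := by omega
    have h2 : (n - 1 - j + k') ≡ m [MOD n] := h1.add_right_cancel' (j + 1)
    have h3 : (n - 1 - j + k') % n = m % n := h2
    rwa [Nat.mod_eq_of_lt hm] at h3
  by_cases hpar : n % 2 = 0 ∧ k' % 2 = 0
  · -- adjacent-pair case
    obtain ⟨hn2, hk2⟩ := hpar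
    have hn2' : 2 ≤ n := by omega
    set T := k' + 2 * n - 2 with hT
    set t' := T % n with ht'
    have ht'n : t' < n := Nat.mod_lt _ hn0
    have hv := Nat.mod_add_div T n
    have hveven : (n * (T / n)) % 2 = 0 := by
      have : Even (n * (T / n)) := (Nat.even_iff.mpr hn2).mul_right _
      exact Nat.even_iff.mp this
    have ht'even : t' % 2 = 0 := by omega
    set j := t' / 2 with hj0
    have h2j : 2 * j = t' := by omega
    have hjn : j + 1 < n := by omega
    have hcong : (j + (j + 1) + 1) % n = k' % n := by
      have e1 : j + (j + 1) + 1 = t' + 2 := by omega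
      rw [e1]
      have e2 : t' + 2 ≡ T + 2 [MOD n] := (Nat.mod_modEq T n).add_right 2
      have e3 : T + 2 = k' + 2 * n := by omega
      have e4 : k' + 2 * n ≡ k' + 0 [MOD n] :=
        Nat.ModEq.add_left k' ((Nat.modEq_zero_iff_dvd).mpr ⟨2, by ring⟩)
      calc (t' + 2) % n = (T + 2) % n := e2
        _ = (k' + 2 * n) % n := by rw [e3]
        _ = (k' + 0) % n := e4
        _ = k' % n := by rw [Nat.add_zero]
    have hσ : (n - 1 - j + k') % n = j + 1 := key j (by omega) (j + 1) hjn hcong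
    have hREL := REL j (by omega) (Nat.mod_lt _ hn0)
    rw [getElem_idx_congr hσ] at hREL
    -- contradiction with Reduced X
    have hred : Reduced X := hc.reduced
    have hchain := List.isChain_iff_getElem.mp hred j (by omega)
    apply hchain
    constructor
    · rw [hREL]
    · rw [hREL]
      simp
  · -- fixed-point case
    set T := k' + 2 * n - 1 with hT
    set t' := T % n with ht'
    have ht'n : t' < n := Nat.mod_lt _ hn0
    have hv := Nat.mod_add_div T n
    have hcongT : ∀ j, 2 * j = t' + n ∨ 2 * j = t' → (j + j + 1) % n = k' % n := by
      intro j h2j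
      have e2 : t' + 1 ≡ T + 1 [MOD n] := (Nat.mod_modEq T n).add_right 1
      have e3 : T + 1 = k' + 2 * n := by omega
      have e4 : k' + 2 * n ≡ k' + 0 [MOD n] :=
        Nat.ModEq.add_left k' ((Nat.modEq_zero_iff_dvd).mpr ⟨2, by ring⟩)
      have base : (t' + 1) % n = k' % n := by
        calc (t' + 1) % n = (T + 1) % n := e2
          _ = (k' + 2 * n) % n := by rw [e3]
          _ = (k' + 0) % n := e4
          _ = k' % n := by rw [Nat.add_zero]
      rcases h2j with h2j | h2j
      · have e5 : j + j + 1 = (t' + 1) + n := by omega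
        rw [e5]
        rw [Nat.add_mod_right]
        exact base
      · have e5 : j + j + 1 = t' + 1 := by omega
        rw [e5]
        exact base
    have hex : ∃ j, j < n ∧ (2 * j = t' + n ∨ 2 * j = t') := by
      by_cases ht'p : t' % 2 = 0
      · exact ⟨t' / 2, by omega, Or.inr (by omega)⟩
      · -- t' odd: n must be odd
        have hnodd : n % 2 = 1 := by
          by_contra hne2
          have hn2 : n % 2 = 0 := by omega
          have hk2 : k' % 2 = 1 := by
            rcases Nat.even_or_odd k' with he | ho
            · exact absurd ⟨hn2, Nat.even_iff.mp he⟩ hpar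
            · exact Nat.odd_iff.mp ho
          have hveven : (n * (T / n)) % 2 = 0 := by
            have : Even (n * (T / n)) := (Nat.even_iff.mpr hn2).mul_right _
            exact Nat.even_iff.mp this
          omega
        exact ⟨(t' + n) / 2, by omega, Or.inl (by omega)⟩
    obtain ⟨j, hjn, h2j⟩ := hex
    have hσ : (n - 1 - j + k') % n = j := key j hjn j hjn (hcongT j h2j)
    have hREL := REL j hjn (Nat.mod_lt _ hn0)
    rw [getElem_idx_congr hσ] at hREL
    have := congrArg Prod.snd hREL
    simp at this
theorem pext {p q : α × Bool} (h1 : p.1 = q.1) (h2 : p.2 = q.2) : p = q := by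
  rcases p with ⟨a, b⟩; rcases q with ⟨a', b'⟩
  simp only at h1 h2
  simp [h1, h2]

theorem conj_inv_aux : ∀ (n : ℕ) (x g : FreeGroup α), x.toWord.length ≤ n →
    g * x * g⁻¹ = x⁻¹ → x = 1 := by
  intro n
  induction n with
  | zero =>
    intro x g hlen _
    exact FreeGroup.toWord_eq_nil_iff.mp (List.length_eq_zero_iff.mp (Nat.le_zero.mp hlen))
  | succ n ih =>
    intro x g hlen heq
    by_cases hcyc : CyclRed x.toWord
    · obtain ⟨k, hk⟩ := conj_rotate hcyc heq
      exact FreeGroup.toWord_eq_nil_iff.mp (nil_of_invRev_eq_rotate hcyc hk)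
    · rcases hX : x.toWord with _ | ⟨p, Y⟩
      · exact FreeGroup.toWord_eq_nil_iff.mp hX
      have hred : Reduced (p :: Y) := by rw [← hX]; exact reduced_toWord x
      have hbad : bad ((p :: Y).getLast (by simp)) p := by
        by_contra hb
        apply hcyc
        rw [hX]
        apply List.isChain_append.mpr
        refine ⟨hred, hred, ?_⟩
        intro a ha b hb'
        rw [List.getLast?_eq_getLast_of_ne_nil (by simp), Option.mem_def,
          Option.some.injEq] at ha
        simp only [List.head?_cons, Option.mem_def, Option.some.injEq] at hb'
        subst ha; subst hb'
        exact hb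
      rcases Y with _ | ⟨y0, Y'⟩
      · obtain ⟨_, h2⟩ := hbad
        simp at h2
      · have hYne : (y0 :: Y' : List (α × Bool)) ≠ [] := by simp
        have hgl : (p :: y0 :: Y').getLast (by simp) = (y0 :: Y').getLast hYne :=
          List.getLast_cons hYne
        set ℓ := (y0 :: Y').getLast hYne with hℓ
        rw [hgl] at hbad
        have hp : p = (ℓ.1, !ℓ.2) := by
          obtain ⟨h1, h2⟩ := hbad
          refine pext h1.symm ?_
          rw [h2, Bool.not_not]
        have htl : y0 :: Y' = (y0 :: Y').dropLast ++ [ℓ] :=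
          (List.dropLast_append_getLast hYne).symm
        set D := (y0 :: Y').dropLast with hD
        have hredD : Reduced D := by
          have h1 : Reduced (y0 :: Y') := hred.tail
          rw [htl] at h1
          exact h1.prefix (List.prefix_append D [ℓ])
        have hxmk : x = FreeGroup.mk ([(ℓ.1, !ℓ.2)] ++ (D ++ [ℓ])) := by
          conv_lhs => rw [← FreeGroup.mk_toWord (x := x)]
          rw [hX]
          congr 1
          rw [← hp, ← htl]
          rfl
        have hxd : x = (FreeGroup.mk [ℓ])⁻¹ * FreeGroup.mk D * FreeGroup.mk [ℓ] := by
          rw [FreeGroup.inv_mk, invRev_singleton, FreeGroup.mul_mk, FreeGroup.mul_mk, hxmk]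
          rw [List.append_assoc]
        have hlenD : (FreeGroup.mk D).toWord.length ≤ n := by
          rw [toWord_mk_reduced hredD]
          have h1 : (p :: y0 :: Y').length ≤ n + 1 := by rw [← hX]; exact hlen
          have h2 : D.length = Y'.length := by rw [hD]; simp
          simp only [List.length_cons] at h1
          omega
        have heqD : (FreeGroup.mk [ℓ] * g * (FreeGroup.mk [ℓ])⁻¹) * FreeGroup.mk D *
            (FreeGroup.mk [ℓ] * g * (FreeGroup.mk [ℓ])⁻¹)⁻¹ = (FreeGroup.mk D)⁻¹ := by
          have h0 : g * ((FreeGroup.mk [ℓ])⁻¹ * FreeGroup.mk D * FreeGroup.mk [ℓ]) * g⁻¹ =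
              ((FreeGroup.mk [ℓ])⁻¹ * FreeGroup.mk D * FreeGroup.mk [ℓ])⁻¹ := by
            rw [← hxd]; exact heq
          have h1 : (FreeGroup.mk [ℓ] * g * (FreeGroup.mk [ℓ])⁻¹) * FreeGroup.mk D *
              (FreeGroup.mk [ℓ] * g * (FreeGroup.mk [ℓ])⁻¹)⁻¹ =
              FreeGroup.mk [ℓ] *
                (g * ((FreeGroup.mk [ℓ])⁻¹ * FreeGroup.mk D * FreeGroup.mk [ℓ]) * g⁻¹) *
                (FreeGroup.mk [ℓ])⁻¹ := by group
          rw [h1, h0]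
          group
        have hD1 : FreeGroup.mk D = 1 := ih (FreeGroup.mk D) _ hlenD heqD
        rw [hxd, hD1]
        group

theorem conj_eq_inv_imp_eq_one {x g : FreeGroup α} (h : g * x * g⁻¹ = x⁻¹) : x = 1 :=
  conj_inv_aux x.toWord.length x g le_rfl h

end FGConj

namespace FGMain
open FreeGroup

abbrev F2 := FreeGroup (Fin 2)

/-- Trichotomy for free groups: trivial, infinite cyclic, or contains a free group of rank 2. -/
theorem free_trichotomy (K : Type) [Group K] [IsFreeGroup K] :
    Subsingleton K ∨ Nonempty (K ≃* Multiplicative ℤ) ∨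
      ∃ f : F2 →* K, Function.Injective f := by
  classical
  rcases isEmpty_or_nonempty (IsFreeGroup.Generators K) with hE | hN
  · left
    have h1 : ∀ y : FreeGroup (IsFreeGroup.Generators K), y = 1 := by
      intro y
      rcases hY : y.toWord with _ | ⟨p, _⟩
      · exact FreeGroup.toWord_eq_nil_iff.mp hY
      · exact (hE.false p.1).elim
    constructor
    intro a b
    apply (IsFreeGroup.toFreeGroup K).injective
    rw [h1 ((IsFreeGroup.toFreeGroup K) a), h1 ((IsFreeGroup.toFreeGroup K) b)]
  · obtain ⟨a₀⟩ := hN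
    by_cases hall : ∀ b : IsFreeGroup.Generators K, b = a₀
    · right; left
      set φ : FreeGroup (IsFreeGroup.Generators K) →* Multiplicative ℤ :=
        FreeGroup.lift (fun _ => Multiplicative.ofAdd 1) with hφ
      set ψ : Multiplicative ℤ →* FreeGroup (IsFreeGroup.Generators K) :=
        zpowersHom _ (FreeGroup.of a₀) with hψ
      have h1 : φ.comp ψ = MonoidHom.id _ := by
        apply MonoidHom.ext_mint
        simp [hφ, hψ]
      have h2 : ψ.comp φ = MonoidHom.id _ := by
        apply FreeGroup.ext_hom
        intro b
        rw [hall b]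
        simp [hφ, hψ]
      exact ⟨(IsFreeGroup.toFreeGroup K).trans (MonoidHom.toMulEquiv φ ψ h2 h1)⟩
    · right; right
      push_neg at hall
      obtain ⟨b, hb⟩ := hall
      set f : Fin 2 → IsFreeGroup.Generators K := ![a₀, b] with hf
      set r : IsFreeGroup.Generators K → Fin 2 := fun i => if i = b then 1 else 0 with hr
      have hrf : ∀ i, r (f i) = i := by
        intro i
        fin_cases i <;> simp [hf, hr, Ne.symm hb]
      have hinj : Function.Injective (FreeGroup.map f : F2 →* FreeGroup _) := by
        have hleft : Function.LeftInverse (FreeGroup.map r) (FreeGroup.map f) := by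
          intro x
          rw [FreeGroup.map.comp]
          have hid : r ∘ f = id := funext hrf
          rw [hid]
          exact FreeGroup.map.id x
        exact hleft.injective
      exact ⟨(IsFreeGroup.toFreeGroup K).symm.toMonoidHom.comp (FreeGroup.map f),
        ((IsFreeGroup.toFreeGroup K).symm.injective).comp hinj⟩

theorem ker_isFreeGroup {L : Type} [Group L] (q r : L →* F2)
    (hjoint : ∀ l : L, q l = 1 → r l = 1 → l = 1) : IsFreeGroup q.ker := by
  set r' : q.ker →* F2 := r.comp q.ker.subtype with hr'
  have hinj : Function.Injective r' := by
    rw [injective_iff_map_eq_one]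
    intro k hk
    exact Subtype.ext (hjoint ↑k k.2 hk)
  exact IsFreeGroup.ofMulEquiv (MonoidHom.ofInjective hinj).symm

theorem free_case {L : Type} [Group L] (q : L →* F2) (hinj : Function.Injective q) :
    ∃ ι : Type, Nonempty (L ≃* FreeGroup ι) :=
  ⟨IsFreeGroup.Generators q.range,
    ⟨(MonoidHom.ofInjective hinj).trans (IsFreeGroup.toFreeGroup q.range)⟩⟩

theorem z_case {L : Type} [Group L] (q r : L →* F2)
    (hjoint : ∀ l : L, q l = 1 → r l = 1 → l = 1)
    (e : q.ker ≃* Multiplicative ℤ) :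
    ∃ ι : Type, Nonempty (L ≃* Multiplicative ℤ × FreeGroup ι) := by
  classical
  have hpow : ∀ s : ℤ, (Multiplicative.ofAdd (1 : ℤ)) ^ s = Multiplicative.ofAdd s := by
    intro s
    apply Multiplicative.toAdd.injective
    rw [toAdd_zpow]
    simp
  -- centrality of the kernel
  have hcent : ∀ (l k : L), k ∈ q.ker → l * k * l⁻¹ = k := by
    intro l k hk
    set c : MulAut q.ker := MulAut.conjNormal l with hc
    set t : ℤ := Multiplicative.toAdd (e (c (e.symm (Multiplicative.ofAdd 1)))) with ht
    have hmz : ∀ s : ℤ, e (c (e.symm (Multiplicative.ofAdd s))) = Multiplicative.ofAdd (s * t) := by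
      intro s
      rw [← hpow s, _root_.map_zpow, _root_.map_zpow, _root_.map_zpow]
      apply Multiplicative.toAdd.injective
      rw [toAdd_zpow]
      simp [ht, mul_comm]
    -- inverse conjugation
    set c' : MulAut q.ker := MulAut.conjNormal l⁻¹ with hc'
    set t' : ℤ := Multiplicative.toAdd (e (c' (e.symm (Multiplicative.ofAdd 1)))) with ht'
    have hmz' : ∀ s : ℤ, e (c' (e.symm (Multiplicative.ofAdd s))) = Multiplicative.ofAdd (s * t') := by
      intro s
      rw [← hpow s, _root_.map_zpow, _root_.map_zpow, _root_.map_zpow]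
      apply Multiplicative.toAdd.injective
      rw [toAdd_zpow]
      simp [ht', mul_comm]
    have hcc' : ∀ x : q.ker, c' (c x) = x := by
      intro x
      ext
      show l⁻¹ * ↑(c x) * l⁻¹⁻¹ = ↑x
      have : (↑(c x) : L) = l * ↑x * l⁻¹ := rfl
      rw [this]
      group
    have htt' : t * t' = 1 := by
      have h2 : e (c' (c (e.symm (Multiplicative.ofAdd 1)))) = Multiplicative.ofAdd 1 := by
        rw [hcc', MulEquiv.apply_symm_apply]
      have h3 : c (e.symm (Multiplicative.ofAdd 1)) = e.symm (Multiplicative.ofAdd (1 * t)) := by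
        apply e.injective
        rw [hmz 1, MulEquiv.apply_symm_apply]
      rw [h3, hmz' (1 * t)] at h2
      have h4 : 1 * t * t' = 1 := by
        have := Multiplicative.ofAdd.injective h2
        simpa using this
      simpa using h4
    rcases Int.isUnit_iff.mp (IsUnit.of_mul_eq_one t' htt') with ht1 | ht1
    · -- conjugation is the identity on the kernel
      have h3 : c ⟨k, hk⟩ = ⟨k, hk⟩ := by
        apply e.injective
        have h4 : e.symm (Multiplicative.ofAdd (Multiplicative.toAdd (e ⟨k, hk⟩))) = ⟨k, hk⟩ := by
          simp
        calc e (c ⟨k, hk⟩)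
            = e (c (e.symm (Multiplicative.ofAdd (Multiplicative.toAdd (e ⟨k, hk⟩))))) := by
              rw [h4]
          _ = Multiplicative.ofAdd (Multiplicative.toAdd (e ⟨k, hk⟩) * t) := hmz _
          _ = e ⟨k, hk⟩ := by rw [ht1, mul_one]; simp
      have := congrArg Subtype.val h3
      exact this
    · -- conjugation inverts the kernel: contradiction with free-group lemma
      exfalso
      set k₀ : q.ker := e.symm (Multiplicative.ofAdd 1) with hk₀
      have hck₀ : c k₀ = k₀⁻¹ := by
        apply e.injective
        rw [_root_.map_inv]
        calc e (c k₀) = Multiplicative.ofAdd (1 * t) := by rw [hk₀]; exact hmz 1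
          _ = Multiplicative.ofAdd (-1 : ℤ) := by rw [ht1, one_mul]
          _ = (Multiplicative.ofAdd (1 : ℤ))⁻¹ := rfl
          _ = (e k₀)⁻¹ := by rw [hk₀, MulEquiv.apply_symm_apply]
      have h5 : l * (k₀ : L) * l⁻¹ = (k₀ : L)⁻¹ := by
        have h6 : (↑(c k₀) : L) = l * ↑k₀ * l⁻¹ := rfl
        rw [← h6, hck₀]
        rfl
      have h6 : r l * r ↑k₀ * (r l)⁻¹ = (r ↑k₀)⁻¹ := by
        rw [← _root_.map_inv, ← _root_.map_inv, ← _root_.map_mul, ← _root_.map_mul, h5]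
      have h7 : r ↑k₀ = 1 := FGConj.conj_eq_inv_imp_eq_one h6
      have h9 : (k₀ : L) = 1 := hjoint _ k₀.2 h7
      have h10 : k₀ = 1 := Subtype.ext h9
      have h11 : (Multiplicative.ofAdd (1 : ℤ)) = 1 := by
        calc Multiplicative.ofAdd (1 : ℤ) = e k₀ := (e.apply_symm_apply _).symm
          _ = e 1 := by rw [h10]
          _ = 1 := _root_.map_one e
      simpa using h11
  -- splitting of the extension
  set Q := q.range with hQ
  set q' : L →* Q := q.rangeRestrict with hq'
  have hq'surj : Function.Surjective q' := q.rangeRestrict_surjective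
  have hker' : q'.ker = q.ker := q.ker_rangeRestrict
  set σ : Q →* L := IsFreeGroup.lift (fun b => (hq'surj (IsFreeGroup.of b)).choose) with hσ
  have hsec : ∀ w : Q, q' (σ w) = w := by
    have h1 : q'.comp σ = MonoidHom.id Q := by
      apply IsFreeGroup.ext_hom
      intro b
      simp only [MonoidHom.comp_apply, MonoidHom.id_apply, hσ, IsFreeGroup.lift_of]
      exact (hq'surj (IsFreeGroup.of b)).choose_spec
    intro w
    exact DFunLike.congr_fun h1 w
  have hmemπ : ∀ l : L, l * (σ (q' l))⁻¹ ∈ q.ker := by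
    intro l
    rw [← hker', MonoidHom.mem_ker, _root_.map_mul, _root_.map_inv, hsec, mul_inv_cancel]
  set π : L →* q.ker :=
    { toFun := fun l => ⟨l * (σ (q' l))⁻¹, hmemπ l⟩
      map_one' := by ext; simp
      map_mul' := by
        intro a b
        ext
        show (a * b) * (σ (q' (a * b)))⁻¹ = (a * (σ (q' a))⁻¹) * (b * (σ (q' b))⁻¹)
        have hcomm : ∀ z : L, z * (b * (σ (q' b))⁻¹) = (b * (σ (q' b))⁻¹) * z := by
          intro z
          have h1 := hcent z _ (hmemπ b)
          calc z * (b * (σ (q' b))⁻¹)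
              = (z * (b * (σ (q' b))⁻¹) * z⁻¹) * z := by group
            _ = (b * (σ (q' b))⁻¹) * z := by rw [h1]
        rw [_root_.map_mul q', _root_.map_mul σ, mul_inv_rev]
        calc a * b * ((σ (q' b))⁻¹ * (σ (q' a))⁻¹)
            = a * (b * (σ (q' b))⁻¹) * (σ (q' a))⁻¹ := by group
          _ = (b * (σ (q' b))⁻¹) * a * (σ (q' a))⁻¹ := by rw [hcomm a]
          _ = (b * (σ (q' b))⁻¹) * (a * (σ (q' a))⁻¹) := by rw [mul_assoc]
          _ = (a * (σ (q' a))⁻¹) * (b * (σ (q' b))⁻¹) := (hcomm _).symm } with hπ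
  set Φ : L →* q.ker × Q := π.prod q' with hΦ
  have hbij : Function.Bijective Φ := by
    constructor
    · rw [injective_iff_map_eq_one]
      intro l hl
      rw [Prod.ext_iff] at hl
      obtain ⟨h1, h2⟩ := hl
      have h2' : q' l = 1 := h2
      have h3 : l * (σ (q' l))⁻¹ = 1 := congrArg Subtype.val h1
      rw [h2', _root_.map_one] at h3
      simpa using h3
    · rintro ⟨k, w⟩
      refine ⟨↑k * σ w, ?_⟩
      have hq'k : q' ↑k = 1 := MonoidHom.mem_ker.mp (hker'.symm ▸ k.2)
      have hqw : q' (↑k * σ w) = w := by rw [_root_.map_mul, hq'k, one_mul, hsec]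
      have hπk : π (↑k * σ w) = k := by
        ext
        show (↑k * σ w) * (σ (q' (↑k * σ w)))⁻¹ = ↑k
        rw [hqw]
        group
      rw [hΦ]
      simp only [MonoidHom.prod_apply]
      rw [hπk, hqw]
  exact ⟨IsFreeGroup.Generators Q,
    ⟨(MulEquiv.ofBijective Φ hbij).trans (MulEquiv.prodCongr e (IsFreeGroup.toFreeGroup Q))⟩⟩

end FGMain

open FGMain in
/-- A finitely generated subgroup of `F₂ × F₂` either contains a copy of
`F₂ × F₂`, or is free, or is isomorphic to `ℤ × F` for a free group `F`. -/
theorem subgroup_of_F2_prod_F2_classification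
    (L : Subgroup (FreeGroup (Fin 2) × FreeGroup (Fin 2))) (hfg : L.FG) :
    (∃ H : Subgroup L,
        Nonempty (H ≃* (FreeGroup (Fin 2) × FreeGroup (Fin 2)))) ∨
    (∃ ι : Type, Nonempty (L ≃* FreeGroup ι)) ∨
    (∃ ι : Type, Nonempty (L ≃* (Multiplicative ℤ × FreeGroup ι))) := by
  classical
  set q1 : L →* F2 := (MonoidHom.fst F2 F2).comp L.subtype with hq1
  set q2 : L →* F2 := (MonoidHom.snd F2 F2).comp L.subtype with hq2
  have hjoint12 : ∀ l : ↥L, q1 l = 1 → q2 l = 1 → l = 1 := by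
    intro l h1 h2
    apply Subtype.ext
    exact Prod.ext_iff.mpr ⟨h1, h2⟩
  have hjoint21 : ∀ l : ↥L, q2 l = 1 → q1 l = 1 → l = 1 := fun l h1 h2 => hjoint12 l h2 h1
  haveI hk1free : IsFreeGroup q1.ker := ker_isFreeGroup q1 q2 hjoint12
  have inj_of_sub : ∀ q : ↥L →* F2, Subsingleton q.ker → Function.Injective q := by
    intro q hsub
    rw [injective_iff_map_eq_one]
    intro a ha
    have h1 : (⟨a, ha⟩ : q.ker) = ⟨1, by simp⟩ := hsub.elim _ _
    exact congrArg Subtype.val h1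
  rcases free_trichotomy q1.ker with hsub | ⟨e⟩ | ⟨j1, hj1⟩
  · exact Or.inr (Or.inl (free_case q1 (inj_of_sub q1 hsub)))
  · exact Or.inr (Or.inr (z_case q1 q2 hjoint12 e.some))
  · haveI hk2free : IsFreeGroup q2.ker := ker_isFreeGroup q2 q1 hjoint21
    rcases free_trichotomy q2.ker with hsub | ⟨e⟩ | ⟨j2, hj2⟩
    · exact Or.inr (Or.inl (free_case q2 (inj_of_sub q2 hsub)))
    · exact Or.inr (Or.inr (z_case q2 q1 hjoint21 e.some))
    · left
      set f : F2 →* ↥L := q2.ker.subtype.comp j2 with hfdef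
      set g : F2 →* ↥L := q1.ker.subtype.comp j1 with hgdef
      have hfker : ∀ m, q2 (f m) = 1 := fun m => (j2 m).2
      have hgker : ∀ m, q1 (g m) = 1 := fun m => (j1 m).2
      have hcomm : ∀ m n, Commute (f m) (g n) := by
        intro m n
        have hc1 : q1 (f m * g n * (f m)⁻¹ * (g n)⁻¹) = 1 := by
          simp [_root_.map_mul, _root_.map_inv, hgker n]
        have hc2 : q2 (f m * g n * (f m)⁻¹ * (g n)⁻¹) = 1 := by
          simp [_root_.map_mul, _root_.map_inv, hfker m]
        have h2 : f m * g n * (f m)⁻¹ * (g n)⁻¹ = 1 := hjoint12 _ hc1 hc2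
        show f m * g n = g n * f m
        calc f m * g n = (f m * g n * (f m)⁻¹ * (g n)⁻¹) * (g n * f m) := by group
          _ = g n * f m := by rw [h2]; group
      set Ψ : F2 × F2 →* ↥L := MonoidHom.noncommCoprod f g hcomm with hΨ
      have hinj : Function.Injective Ψ := by
        rw [injective_iff_map_eq_one]
        rintro ⟨m, n⟩ hmn
        have happ : f m * g n = 1 := hmn
        have h1 : q1 (f m) = 1 := by
          have h3 := congrArg q1 happ
          rw [_root_.map_mul, hgker n, mul_one, _root_.map_one] at h3
          exact h3
        have hfm1 : f m = 1 := hjoint12 _ h1 (hfker m)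
        have hgn1 : g n = 1 := by rw [hfm1, one_mul] at happ; exact happ
        have hfInj : Function.Injective f := (Subgroup.subtype_injective _).comp hj2
        have hgInj : Function.Injective g := (Subgroup.subtype_injective _).comp hj1
        have hm : m = 1 := hfInj (by rw [hfm1, _root_.map_one])
        have hn : n = 1 := hgInj (by rw [hgn1, _root_.map_one])
        exact Prod.ext_iff.mpr ⟨hm, hn⟩
      exact ⟨Ψ.range, ⟨(MonoidHom.ofInjective hinj).symm⟩⟩
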